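/- Let A, U, B, V be matrices and λ > 0, Δt > 0 such that I + Δt²λA is invertible. Define G = V - Δt²λ B (I + Δt²λ A)⁻¹ U. Suppose G = W D W⁻¹ with D diagonal of spectral radius ρ(G) ≤ 1, and consider two coupled error recurrences: (I + Δt²λA)E_{n+1} = U e_n + T_n and e_{n+1} = G e_n + θ_n with e_0 = 0, E_0 = 0. If ‖W⁻¹θ_n‖ ≤ C₁ Δt^{p+1}, ‖T_n‖ ≤ C₂ Δt^{a+1}, and ‖W‖ ≤ C₃ Δt^{q} for all n ≤ N with NΔt = T fixed, then ‖e_n‖ ≤ C Δt^{q+p} and ‖E_n‖ ≤ C' Δt^{min(a+1, q+p)} for constants C, C' independent of Δt. -/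

import Mathlib

set_option maxHeartbeats 1000000

open Matrix

/-- The continuous linear map on Euclidean spaces induced by a (rectangular)
complex matrix; its operator norm is the ℓ²-induced matrix norm. -/
noncomputable def matCLM {m n : ℕ} (M : Matrix (Fin m) (Fin n) ℂ) :
    EuclideanSpace ℂ (Fin n) →L[ℂ] EuclideanSpace ℂ (Fin m) :=
  LinearMap.toContinuousLinearMap (Matrix.toEuclideanLin M)

lemma matCLM_mul {k m n : ℕ} (M : Matrix (Fin m) (Fin n) ℂ) (N : Matrix (Fin n) (Fin k) ℂ)
    (x : EuclideanSpace ℂ (Fin k)) : matCLM (M * N) x = matCLM M (matCLM N x) := by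
  simp [matCLM, Matrix.toEuclideanLin_eq_toLin, Matrix.toLin_mul _ (PiLp.basisFun 2 ℂ (Fin n)) _]

lemma matCLM_one {n : ℕ} (x : EuclideanSpace ℂ (Fin n)) :
    matCLM (1 : Matrix (Fin n) (Fin n) ℂ) x = x := by
  simp [matCLM, Matrix.toEuclideanLin_eq_toLin]

lemma matCLM_add {m n : ℕ} (M N : Matrix (Fin m) (Fin n) ℂ) :
    matCLM (M + N) = matCLM M + matCLM N := by
  ext x i; simp [matCLM, map_add]

lemma matCLM_smul {m n : ℕ} (c : ℂ) (M : Matrix (Fin m) (Fin n) ℂ) :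
    matCLM (c • M) = c • matCLM M := by
  ext x i; simp [matCLM, _root_.map_smul]

lemma matCLM_apply_coord {m n : ℕ} (M : Matrix (Fin m) (Fin n) ℂ)
    (x : EuclideanSpace ℂ (Fin n)) (i : Fin m) :
    matCLM M x i = M.mulVec (fun j => x j) i := by
  simp [matCLM, Matrix.toEuclideanLin_apply]

lemma matCLM_diag_le {n : ℕ} (D : Fin n → ℂ) (h : ∀ i, ‖D i‖ ≤ 1)
    (x : EuclideanSpace ℂ (Fin n)) : ‖matCLM (Matrix.diagonal D) x‖ ≤ ‖x‖ := by
  rw [EuclideanSpace.norm_eq, EuclideanSpace.norm_eq]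
  apply Real.sqrt_le_sqrt
  apply Finset.sum_le_sum
  intro i _
  rw [matCLM_apply_coord, Matrix.mulVec_diagonal]
  have h1 : ‖D i * x i‖ ≤ ‖x i‖ := by
    rw [norm_mul]
    calc ‖D i‖ * ‖x i‖ ≤ 1 * ‖x i‖ := by
          apply mul_le_mul_of_nonneg_right _ (norm_nonneg _)
          simpa using h i
      _ = ‖x i‖ := one_mul _
  exact pow_le_pow_left₀ (norm_nonneg _) h1 2

lemma zpow_le_aux (t T : ℝ) (ht : 0 < t) (htT : t ≤ T) (e mn : ℤ) (h : mn ≤ e) :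
    t ^ e ≤ (max 1 T) ^ (e - mn).toNat * t ^ mn := by
  have h1 : t ^ e = t ^ mn * t ^ (e - mn).toNat := by
    rw [← zpow_natCast t, ← zpow_add₀ ht.ne', Int.toNat_of_nonneg (by omega)]
    ring_nf
  rw [h1]
  have h2 : t ^ (e - mn).toNat ≤ (max 1 T) ^ (e - mn).toNat :=
    pow_le_pow_left₀ ht.le (htT.trans (le_max_right 1 T)) _
  calc t ^ mn * t ^ (e - mn).toNat ≤ t ^ mn * (max 1 T) ^ (e - mn).toNat :=
        mul_le_mul_of_nonneg_left h2 (zpow_nonneg ht.le _)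
    _ = _ := mul_comm _ _

lemma neumann_aux {n : ℕ} (S : Matrix (Fin n) (Fin n) ℂ) (hS : IsUnit S.det)
    (hsm : ‖ContinuousLinearMap.id ℂ (EuclideanSpace ℂ (Fin n)) - matCLM S‖ ≤ 1/2) :
    ‖matCLM S⁻¹‖ ≤ 2 := by
  set J := matCLM S⁻¹ with hJ
  have hcomp : J.comp (matCLM S) = ContinuousLinearMap.id ℂ _ := by
    ext x
    simp [hJ, ← matCLM_mul, Matrix.nonsing_inv_mul S hS, matCLM_one]
  have hid : J = J.comp (ContinuousLinearMap.id ℂ _ - matCLM S) + ContinuousLinearMap.id ℂ _ := by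
    rw [ContinuousLinearMap.comp_sub, hcomp]
    simp
  have h3 : ‖J‖ ≤ ‖J‖ * (1/2) + 1 := by
    calc ‖J‖ = ‖J.comp (ContinuousLinearMap.id ℂ _ - matCLM S) + ContinuousLinearMap.id ℂ _‖ := by
          rw [← hid]
      _ ≤ ‖J.comp (ContinuousLinearMap.id ℂ (EuclideanSpace ℂ (Fin n)) - matCLM S)‖
          + ‖ContinuousLinearMap.id ℂ (EuclideanSpace ℂ (Fin n))‖ := norm_add_le _ _
      _ ≤ ‖J‖ * (1/2) + 1 := by
          have h1 : ‖J.comp (ContinuousLinearMap.id ℂ (EuclideanSpace ℂ (Fin n)) - matCLM S)‖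
              ≤ ‖J‖ * (1/2) :=
            (J.opNorm_comp_le _).trans (mul_le_mul_of_nonneg_left hsm (norm_nonneg J))
          have h2 : ‖ContinuousLinearMap.id ℂ (EuclideanSpace ℂ (Fin n))‖ ≤ 1 :=
            ContinuousLinearMap.norm_id_le
          linarith
  linarith

/-- convergence estimate for General Linear Methods with coupled
error recurrences. -/
theorem stmt_16 (m d : ℕ) (lam T C₁ C₂ C₃ : ℝ) (p a q : ℤ)
    (A : Matrix (Fin m) (Fin m) ℂ) (U : Matrix (Fin m) (Fin d) ℂ)
    (B : Matrix (Fin d) (Fin m) ℂ) (V : Matrix (Fin d) (Fin d) ℂ)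
    (hlam : 0 < lam) (hT : 0 < T) :
    ∃ C C' : ℝ, ∀ Δt : ℝ, 0 < Δt → ∀ N : ℕ, (N : ℝ) * Δt = T →
      ∀ (G W : Matrix (Fin d) (Fin d) ℂ) (D : Fin d → ℂ),
        IsUnit ((1 : Matrix (Fin m) (Fin m) ℂ) + ((Δt ^ 2 * lam : ℝ) : ℂ) • A).det →
        G = V - ((Δt ^ 2 * lam : ℝ) : ℂ) •
          (B * ((1 : Matrix (Fin m) (Fin m) ℂ) + ((Δt ^ 2 * lam : ℝ) : ℂ) • A)⁻¹ * U) →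
        G = W * Matrix.diagonal D * W⁻¹ →
        IsUnit W.det →
        (∀ i, ‖D i‖ ≤ 1) →
        ∀ (E Tn : ℕ → EuclideanSpace ℂ (Fin m)) (e θ : ℕ → EuclideanSpace ℂ (Fin d)),
          e 0 = 0 → E 0 = 0 →
          (∀ n < N, matCLM ((1 : Matrix (Fin m) (Fin m) ℂ)
              + ((Δt ^ 2 * lam : ℝ) : ℂ) • A) (E (n + 1)) = matCLM U (e n) + Tn n) →
          (∀ n < N, e (n + 1) = matCLM G (e n) + θ n) →
          (∀ n ≤ N, ‖matCLM W⁻¹ (θ n)‖ ≤ C₁ * Δt ^ (p + 1)) →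
          (∀ n ≤ N, ‖Tn n‖ ≤ C₂ * Δt ^ (a + 1)) →
          ‖matCLM W‖ ≤ C₃ * Δt ^ q →
          ∀ n ≤ N, ‖e n‖ ≤ C * Δt ^ (q + p) ∧ ‖E n‖ ≤ C' * Δt ^ (min (a + 1) (q + p)) := by
  classical
  set r : ℝ := lam * ‖matCLM A‖ with hr
  have hr0 : 0 ≤ r := mul_nonneg hlam.le (norm_nonneg _)
  set δ : ℝ := min 1 (1 / (2 * (r + 1))) with hδ
  have hδ0 : 0 < δ := lt_min one_pos (by positivity)
  have hδ1 : δ ≤ 1 := min_le_left _ _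
  have hδ2 : δ * (2 * (r + 1)) ≤ 1 :=
    (le_div_iff₀ (by positivity)).mp (min_le_right 1 (1 / (2 * (r + 1))))
  set K₀ : ℕ := ⌈T / δ⌉₊ with hK₀
  set f : ℕ → ℝ := fun k =>
    ‖matCLM (((1 : Matrix (Fin m) (Fin m) ℂ)
      + (((T / ((k : ℝ) + 1)) ^ 2 * lam : ℝ) : ℂ) • A)⁻¹)‖ with hf
  set M : ℝ := max 2 ((Finset.range (K₀ + 1)).sup'
    (Finset.nonempty_range_iff.mpr (Nat.succ_ne_zero _)) f) with hM
  have hM2 : (2 : ℝ) ≤ M := le_max_left _ _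
  set K₁ : ℝ := (max 1 T) ^ ((q + p) - min (a + 1) (q + p)).toNat with hK₁
  set K₂ : ℝ := (max 1 T) ^ ((a + 1) - min (a + 1) (q + p)).toNat with hK₂
  have hK₁0 : 0 ≤ K₁ := pow_nonneg (le_trans zero_le_one (le_max_left _ _)) _
  have hK₂0 : 0 ≤ K₂ := pow_nonneg (le_trans zero_le_one (le_max_left _ _)) _
  refine ⟨C₃ * C₁ * T, M * (‖matCLM U‖ * (C₃ * C₁ * T) * K₁ + |C₂| * K₂), ?_⟩
  intro Δt hΔt N hNT G W D hSdet hGdef hGW hW hD E Tn e θ he0 hE0 hErec herec hθ hTn hWnorm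
  have hN0 : N ≠ 0 := by
    rintro rfl
    simp at hNT
    linarith
  have hN1 : (1 : ℝ) ≤ (N : ℝ) := Nat.one_le_cast.mpr (Nat.one_le_iff_ne_zero.mpr hN0)
  have hΔT : Δt ≤ T := by nlinarith
  have hne : Δt ≠ 0 := hΔt.ne'
  have hzp : ∀ z : ℤ, 0 < Δt ^ z := fun z => zpow_pos hΔt z
  have hC₁ : 0 ≤ C₁ := by
    have h := (norm_nonneg (matCLM W⁻¹ (θ 0))).trans (hθ 0 (Nat.zero_le N))
    nlinarith [hzp (p + 1)]
  have hC₃ : 0 ≤ C₃ := by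
    have h := (norm_nonneg (matCLM W)).trans hWnorm
    nlinarith [hzp q]
  have hC : 0 ≤ C₃ * C₁ * T := mul_nonneg (mul_nonneg hC₃ hC₁) hT.le
  set c : ℂ := ((Δt ^ 2 * lam : ℝ) : ℂ) with hc
  set S : Matrix (Fin m) (Fin m) ℂ := 1 + c • A with hS
  have hSinv_mul : ∀ x, matCLM S⁻¹ (matCLM S x) = x := by
    intro x
    rw [← matCLM_mul, Matrix.nonsing_inv_mul S hSdet, matCLM_one]
  -- uniform bound on the inverse
  have hMS : ‖matCLM S⁻¹‖ ≤ M := by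
    rcases le_or_gt Δt δ with hcase | hcase
    · refine le_trans (neumann_aux S hSdet ?_) hM2
      have h1 : matCLM S = ContinuousLinearMap.id ℂ _ + c • matCLM A := by
        rw [hS, matCLM_add, matCLM_smul]
        congr 1
        ext x i
        rw [matCLM_one]
        rfl
      rw [h1, sub_add_cancel_left, norm_neg]
      have hc' : ‖c‖ = Δt ^ 2 * lam := by
        rw [hc, Complex.norm_real, Real.norm_eq_abs, abs_of_nonneg (by positivity)]
      have hcn : ‖c • matCLM A‖ ≤ (Δt ^ 2 * lam) * ‖matCLM A‖ := by
        refine le_trans (norm_smul_le c (matCLM A)) ?_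
        rw [hc']
      refine hcn.trans ?_
      have hd1 : Δt ^ 2 ≤ δ := by
        nlinarith [mul_nonneg (sub_nonneg.mpr hcase) (by linarith : (0:ℝ) ≤ δ + Δt),
          mul_nonneg hδ0.le (by linarith : (0:ℝ) ≤ 1 - δ)]
      have hd2 : δ * r ≤ 1 / 2 := by nlinarith
      calc Δt ^ 2 * lam * ‖matCLM A‖ = Δt ^ 2 * r := by rw [hr]; ring
        _ ≤ δ * r := mul_le_mul_of_nonneg_right hd1 hr0
        _ ≤ 1 / 2 := hd2
    · -- Δt > δ : finitely many possibilities
      have hNne : (N : ℝ) ≠ 0 := by positivity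
      have hΔeq : Δt = T / (N : ℝ) := by
        rw [eq_div_iff hNne, mul_comm]
        exact hNT
      have hNle : N ≤ K₀ := by
        have h1 : (N : ℝ) ≤ T / δ := by
          rw [le_div_iff₀ hδ0]
          rw [hΔeq] at hcase
          rw [lt_div_iff₀ (by positivity)] at hcase
          nlinarith
        exact_mod_cast Nat.cast_le.mp (h1.trans (Nat.le_ceil _))
      have hmem : N - 1 ∈ Finset.range (K₀ + 1) := by
        rw [Finset.mem_range]; omega
      have hcast : ((N - 1 : ℕ) : ℝ) + 1 = (N : ℝ) := by
        have h1 : 1 ≤ N := Nat.one_le_iff_ne_zero.mpr hN0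
        push_cast [h1]
        ring
      have hfeq : f (N - 1) = ‖matCLM S⁻¹‖ := by
        rw [hf]
        simp only [hcast, ← hΔeq]
        rfl
      calc ‖matCLM S⁻¹‖ = f (N - 1) := hfeq.symm
        _ ≤ (Finset.range (K₀ + 1)).sup'
            (Finset.nonempty_range_iff.mpr (Nat.succ_ne_zero _)) f := Finset.le_sup' f hmem
        _ ≤ M := le_max_right _ _
  -- the diagonalized recursion for e
  set X : ℝ := C₁ * Δt ^ (p + 1) with hX
  have hX0 : 0 ≤ X := mul_nonneg hC₁ (hzp _).le
  have hWinv_G : ∀ x, matCLM W⁻¹ (matCLM G x) = matCLM (Matrix.diagonal D) (matCLM W⁻¹ x) := by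
    intro x
    rw [← matCLM_mul, ← matCLM_mul]
    congr 1
    rw [hGW, Matrix.mul_assoc W, ← Matrix.mul_assoc W⁻¹ W, Matrix.nonsing_inv_mul W hW,
      Matrix.one_mul]
  have He : ∀ n, n ≤ N → ‖matCLM W⁻¹ (e n)‖ ≤ (n : ℝ) * X := by
    intro n
    induction n with
    | zero => intro _; simp [he0]
    | succ k ih =>
      intro hk
      have hkN : k < N := hk
      rw [herec k hkN, map_add, hWinv_G]
      push_cast
      calc ‖matCLM (Matrix.diagonal D) (matCLM W⁻¹ (e k)) + matCLM W⁻¹ (θ k)‖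
          ≤ ‖matCLM (Matrix.diagonal D) (matCLM W⁻¹ (e k))‖ + ‖matCLM W⁻¹ (θ k)‖ :=
            norm_add_le _ _
        _ ≤ ‖matCLM W⁻¹ (e k)‖ + X := add_le_add (matCLM_diag_le D hD _) (hθ k hkN.le)
        _ ≤ (k : ℝ) * X + X := add_le_add_left (ih hkN.le) X
        _ = ((k : ℝ) + 1) * X := by ring
  have Hebound : ∀ n, n ≤ N → ‖e n‖ ≤ C₃ * C₁ * T * Δt ^ (q + p) := by
    intro n hn
    have h1 : e n = matCLM W (matCLM W⁻¹ (e n)) := by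
      rw [← matCLM_mul, Matrix.mul_nonsing_inv W hW, matCLM_one]
    calc ‖e n‖ = ‖matCLM W (matCLM W⁻¹ (e n))‖ := by rw [← h1]
      _ ≤ ‖matCLM W‖ * ‖matCLM W⁻¹ (e n)‖ := (matCLM W).le_opNorm _
      _ ≤ (C₃ * Δt ^ q) * ((N : ℝ) * X) := by
          apply mul_le_mul hWnorm ((He n hn).trans
            (mul_le_mul_of_nonneg_right (Nat.cast_le.mpr hn) hX0)) (norm_nonneg _)
            ((norm_nonneg _).trans hWnorm)
      _ = C₃ * C₁ * T * Δt ^ (q + p) := by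
          rw [hX, zpow_add₀ hne q p, zpow_add₀ hne p 1, zpow_one, ← hNT]
          ring
  intro n hn
  refine ⟨Hebound n hn, ?_⟩
  have hInner0 : 0 ≤ ‖matCLM U‖ * (C₃ * C₁ * T) * K₁ + |C₂| * K₂ :=
    add_nonneg (mul_nonneg (mul_nonneg (norm_nonneg _) hC) hK₁0)
      (mul_nonneg (abs_nonneg _) hK₂0)
  have hM0 : (0 : ℝ) ≤ M := by linarith
  match n, hn with
  | 0, _ =>
    rw [hE0, norm_zero]
    exact mul_nonneg (mul_nonneg hM0 hInner0) (hzp _).le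
  | (k + 1), hn =>
    have hk : k < N := hn
    have h1 : E (k + 1) = matCLM S⁻¹ (matCLM U (e k) + Tn k) := by
      rw [← hErec k hk, hSinv_mul]
    rw [h1]
    have hz1 := zpow_le_aux Δt T hΔt hΔT (q + p) (min (a + 1) (q + p)) (min_le_right _ _)
    have hz2 := zpow_le_aux Δt T hΔt hΔT (a + 1) (min (a + 1) (q + p)) (min_le_left _ _)
    calc ‖matCLM S⁻¹ (matCLM U (e k) + Tn k)‖
        ≤ ‖matCLM S⁻¹‖ * ‖matCLM U (e k) + Tn k‖ := (matCLM S⁻¹).le_opNorm _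
      _ ≤ M * (‖matCLM U‖ * (C₃ * C₁ * T * Δt ^ (q + p)) + C₂ * Δt ^ (a + 1)) := by
          apply mul_le_mul hMS ?_ (norm_nonneg _) hM0
          calc ‖matCLM U (e k) + Tn k‖ ≤ ‖matCLM U (e k)‖ + ‖Tn k‖ := norm_add_le _ _
            _ ≤ ‖matCLM U‖ * (C₃ * C₁ * T * Δt ^ (q + p)) + C₂ * Δt ^ (a + 1) :=
                add_le_add (((matCLM U).le_opNorm _).trans
                  (mul_le_mul_of_nonneg_left (Hebound k hk.le) (norm_nonneg _))) (hTn k hk.le)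
      _ ≤ M * ((‖matCLM U‖ * (C₃ * C₁ * T) * K₁ + |C₂| * K₂) * Δt ^ (min (a + 1) (q + p))) := by
          apply mul_le_mul_of_nonneg_left ?_ hM0
          rw [add_mul]
          apply add_le_add
          · calc ‖matCLM U‖ * (C₃ * C₁ * T * Δt ^ (q + p))
                ≤ ‖matCLM U‖ * (C₃ * C₁ * T * (K₁ * Δt ^ (min (a + 1) (q + p)))) := by
                  apply mul_le_mul_of_nonneg_left
                    (mul_le_mul_of_nonneg_left hz1 hC) (norm_nonneg _)
              _ = ‖matCLM U‖ * (C₃ * C₁ * T) * K₁ * Δt ^ (min (a + 1) (q + p)) := by ring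
          · calc C₂ * Δt ^ (a + 1) ≤ |C₂| * Δt ^ (a + 1) :=
                  mul_le_mul_of_nonneg_right (le_abs_self _) (hzp _).le
              _ ≤ |C₂| * (K₂ * Δt ^ (min (a + 1) (q + p))) :=
                  mul_le_mul_of_nonneg_left hz2 (abs_nonneg _)
              _ = |C₂| * K₂ * Δt ^ (min (a + 1) (q + p)) := (mul_assoc _ _ _).symm
      _ = M * (‖matCLM U‖ * (C₃ * C₁ * T) * K₁ + |C₂| * K₂) * Δt ^ (min (a + 1) (q + p)) := by
          ring
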